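/- There is an absolute constant C > 0 such that for all positive integers n, k, every finite alphabet Σ with |Σ| ≥ 2, and every real 0 < γ ≤ 1, there exists a γ-PRG Gen : {0,1}^s → ({0,1}^n)^k for (k,n,Σ) block decision trees with seed length s ≤ n + C·(k·log₂|Σ| + (1+log₂ k)·(1+log₂(1/γ))). -/

import Mathlib

open Classical

/-- Probability of `P` under the uniform distribution on a finite type. -/
noncomputable def pr {α : Type*} [Fintype α] (P : α → Prop) : ℝ :=
  ((Finset.univ.filter P).card : ℝ) / (Fintype.card α : ℝ)

/-- `f : {0,1}^n → ℝ^d` is `(ε,δ)`-concentrated at `μ`. -/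
def Concentrated (n d : ℕ) (ε δ : ℝ)
    (f : (Fin n → Bool) → Fin d → ℝ) (μ : Fin d → ℝ) : Prop :=
  pr (fun X : Fin n → Bool => ∃ j, |f X j - μ j| > ε) ≤ δ

/-- A deterministic owner for `k` rounds of `(ε,δ)`-concentrated functions
`{0,1}^n → ℝ^d`: given the history of responses `Y_1,…,Y_{i-1}`, it produces
a function `f_i` together with a point `μ_i` at which `f_i` is concentrated. -/
structure Owner (n k d : ℕ) (ε δ : ℝ) where
  act : List (Fin d → ℝ) → (((Fin n → Bool) → Fin d → ℝ) × (Fin d → ℝ))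
  conc : ∀ ys : List (Fin d → ℝ), ys.length < k →
    Concentrated n d ε δ (act ys).1 (act ys).2

/-- A one-query steward with randomness complexity `m`: in each round it chooses
a query point from its randomness and the past query answers, and it chooses a
response from its randomness and the past and current query answers. -/
structure Steward (n k d m : ℕ) where
  q : (Fin m → Bool) → List (Fin d → ℝ) → (Fin n → Bool)
  r : (Fin m → Bool) → List (Fin d → ℝ) → (Fin d → ℝ) → (Fin d → ℝ)

/-- The interaction `O ↔ S(Z)` for `i` rounds: the list of triples `(Y_i, W_i, μ_i)`. -/
noncomputable def run {n k d m : ℕ} {ε δ : ℝ} (O : Owner n k d ε δ) (S : Steward n k d m)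
    (Z : Fin m → Bool) : ℕ → List ((Fin d → ℝ) × (Fin d → ℝ) × (Fin d → ℝ))
  | 0 => []
  | i + 1 =>
    let h := run O S Z i
    let fμ := O.act (h.map fun p => p.1)
    let X := S.q Z (h.map fun p => p.2.1)
    let W := fμ.1 X
    h ++ [(S.r Z (h.map fun p => p.2.1) W, W, fμ.2)]

/-- `S` is a one-query `(ε',δ')`-steward for `k` adaptively chosen
`(ε,δ)`-concentrated functions `{0,1}^n → ℝ^d`. -/
def IsSteward (n k d m : ℕ) (ε δ ε' δ' : ℝ) (S : Steward n k d m) : Prop :=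
  ∀ O : Owner n k d ε δ,
    pr (fun Z : Fin m → Bool =>
      ∃ p ∈ run O S Z k, ∃ j : Fin d, |p.1 j - p.2.2 j| > ε') ≤ δ'

/-- The output string of a `(k,n,Σ)` block decision tree, given as the family of
node functions `v_w` indexed by strings `w`, on input the list `Xs` of blocks:
`σ_i = v_{(σ_1,…,σ_{i-1})}(X_i)`. -/
def treeOutList {A I : Type*} (v : List A → I → A) (Xs : List I) : List A :=
  Xs.foldl (fun w X => w ++ [v w X]) []

/-- `Gen` is a `γ`-PRG for `(k,n,A)` block decision trees: for every tree, the total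
variation distance between the output distribution on pseudorandom inputs and on
truly random inputs is at most `γ`. -/
def IsBDTPRG (n k s : ℕ) (A : Type*) [Fintype A] (γ : ℝ)
    (Gen : (Fin s → Bool) → Fin k → (Fin n → Bool)) : Prop :=
  ∀ v : List A → (Fin n → Bool) → A,
    (1 / 2) * ∑ σ : Fin k → A,
      |pr (fun x : Fin s → Bool => treeOutList v (List.ofFn (Gen x)) = List.ofFn σ)
        - pr (fun X : Fin k → (Fin n → Bool) => treeOutList v (List.ofFn X) = List.ofFn σ)|
      ≤ γ

namespace BDTAux
open Finset

set_option linter.unusedSectionVars false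

section prob
variable {S D : Type} [Fintype S] [Fintype D] [Nonempty S] [Nonempty D]

noncomputable def ind (E : Finset D) (y : D) : ℝ := if y ∈ E then 1 else 0

noncomputable def cnt (E : Finset D) (g : S → D) : ℕ := (univ.filter (fun x => g x ∈ E)).card

lemma cnt_eq_sum (E : Finset D) (g : S → D) :
    (cnt E g : ℝ) = ∑ x : S, ind E (g x) := by
  simp [cnt, ind]

lemma mgf_factor (E : Finset D) (lam p : ℝ) :
    ∑ g : S → D, Real.exp (lam * ((cnt E g : ℝ) - (Fintype.card S : ℝ) * p))
      = (∑ y : D, Real.exp (lam * (ind E y - p))) ^ (Fintype.card S) := by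
  have key : ∀ g : S → D, Real.exp (lam * ((cnt E g : ℝ) - (Fintype.card S : ℝ) * p))
      = ∏ x : S, Real.exp (lam * (ind E (g x) - p)) := by
    intro g
    rw [← Real.exp_sum]
    congr 1
    rw [cnt_eq_sum]
    have h2 : ∑ x : S, lam * (ind E (g x) - p) = lam * ∑ x : S, (ind E (g x) - p) :=
      (Finset.mul_sum _ _ _).symm
    rw [h2, Finset.sum_sub_distrib, Finset.sum_const, Finset.card_univ, nsmul_eq_mul]
  calc ∑ g : S → D, Real.exp (lam * ((cnt E g : ℝ) - (Fintype.card S : ℝ) * p))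
      = ∑ g : S → D, ∏ x : S, Real.exp (lam * (ind E (g x) - p)) :=
        Finset.sum_congr rfl fun g _ => key g
    _ = ∏ x : S, ∑ y : D, Real.exp (lam * (ind E y - p)) :=
        (Fintype.prod_sum (κ := fun _ : S => D) (fun _ y => Real.exp (lam * (ind E y - p)))).symm
    _ = (∑ y : D, Real.exp (lam * (ind E y - p))) ^ (Fintype.card S) := by
        rw [Finset.prod_const, Finset.card_univ]

lemma card_filter_mem (E : Finset D) : (univ.filter (fun y : D => y ∈ E)).card = E.card := by
  congr 1; ext y; simp

lemma card_filter_not_mem (E : Finset D) :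
    (univ.filter (fun y : D => ¬ y ∈ E)).card = Fintype.card D - E.card := by
  have h := Finset.card_filter_add_card_filter_not (s := (univ : Finset D))
    (p := fun y : D => y ∈ E)
  have h1 := card_filter_mem E
  have hle : E.card ≤ Fintype.card D := Finset.card_le_univ E
  simp only [Finset.card_univ] at h
  omega

lemma sum_ind (E : Finset D) (c1 c2 : ℝ) :
    ∑ y : D, (if y ∈ E then c1 else c2) = E.card * c1 + ((Fintype.card D : ℝ) - E.card) * c2 := by
  rw [Finset.sum_ite]
  simp only [Finset.sum_const, nsmul_eq_mul]
  rw [card_filter_mem, card_filter_not_mem]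
  have hle : E.card ≤ Fintype.card D := Finset.card_le_univ E
  rw [Nat.cast_sub hle]

lemma exp_le_one_add_add_sq {x : ℝ} (hx : |x| ≤ 1) : Real.exp x ≤ 1 + x + x ^ 2 := by
  have h := Real.exp_bound hx (n := 2) (by norm_num)
  have h2 : ∑ m ∈ Finset.range 2, x ^ m / m.factorial = 1 + x := by
    simp [Finset.sum_range_succ]
  rw [h2] at h
  have h4 := (abs_sub_le_iff.mp h).1
  have h3 : |x| ^ 2 * ((2:ℕ).succ / (((2:ℕ).factorial : ℝ) * 2)) = x ^ 2 * (3/4) := by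
    rw [sq_abs]; norm_num [Nat.factorial]
  nlinarith [sq_nonneg x]

lemma mgf_scalar {p lam : ℝ} (hp0 : 0 ≤ p) (hp1 : p ≤ 1) (h0 : 0 ≤ lam) (h1 : lam ≤ 1) :
    p * Real.exp (lam * (1 - p)) + (1 - p) * Real.exp (lam * (0 - p)) ≤ Real.exp (lam ^ 2) := by
  have ha : |lam * (1 - p)| ≤ 1 := by
    rw [abs_mul, abs_of_nonneg h0, abs_of_nonneg (by linarith)]; nlinarith
  have hb : |lam * (0 - p)| ≤ 1 := by
    rw [abs_mul, abs_of_nonneg h0]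
    rw [abs_of_nonpos (by linarith)]; nlinarith
  have e1 := exp_le_one_add_add_sq ha
  have e2 := exp_le_one_add_add_sq hb
  have e3 := Real.add_one_le_exp (lam ^ 2)
  nlinarith [mul_nonneg hp0 (sub_nonneg.mpr hp1), sq_nonneg lam,
    mul_le_mul_of_nonneg_left e1 hp0, mul_le_mul_of_nonneg_left e2 (by linarith : (0:ℝ) ≤ 1 - p)]

lemma mgf_one (E : Finset D) {lam : ℝ} (h0 : 0 ≤ lam) (h1 : lam ≤ 1) :
    ∑ y : D, Real.exp (lam * (ind E y - (E.card : ℝ) / (Fintype.card D : ℝ)))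
      ≤ (Fintype.card D : ℝ) * Real.exp (lam ^ 2) := by
  set p : ℝ := (E.card : ℝ) / Fintype.card D with hp
  have hD : (0:ℝ) < Fintype.card D := by exact_mod_cast Fintype.card_pos
  have hp0 : 0 ≤ p := by positivity
  have hp1 : p ≤ 1 := by rw [hp, div_le_one hD]; exact_mod_cast Finset.card_le_univ E
  have hpt : ∀ y : D, Real.exp (lam * (ind E y - p))
      = if y ∈ E then Real.exp (lam * (1 - p)) else Real.exp (lam * (0 - p)) := by
    intro y; unfold ind; split <;> simp
  rw [Finset.sum_congr rfl (fun y _ => hpt y), sum_ind]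
  have hEc : (E.card : ℝ) = Fintype.card D * p := by rw [hp, mul_div_assoc']; exact (mul_div_cancel_left₀ _ hD.ne').symm
  have hms := mgf_scalar hp0 hp1 h0 h1
  rw [hEc]
  nlinarith [mul_le_mul_of_nonneg_left hms hD.le]

lemma chernoff_upper (E : Finset D) {ε : ℝ} (hε0 : 0 ≤ ε) (hε2 : ε ≤ 2) :
    (((univ : Finset (S → D)).filter (fun g : S → D =>
        (Fintype.card S : ℝ) * ((E.card : ℝ) / (Fintype.card D : ℝ) + ε) ≤ (cnt E g : ℝ))).card : ℝ)
      ≤ Real.exp (-(Fintype.card S : ℝ) * ε ^ 2 / 4)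
          * (Fintype.card D : ℝ) ^ (Fintype.card S) := by
  set N : ℝ := (Fintype.card S : ℝ) with hN
  set p : ℝ := (E.card : ℝ) / Fintype.card D with hp
  set lam : ℝ := ε / 2 with hlam
  have hl0 : 0 ≤ lam := by rw [hlam]; linarith
  have hl1 : lam ≤ 1 := by rw [hlam]; linarith
  set bad := (univ : Finset (S → D)).filter (fun g : S → D => N * (p + ε) ≤ (cnt E g : ℝ)) with hbad
  have step1 : ((bad.card : ℝ)) ≤ ∑ g ∈ bad, Real.exp (lam * ((cnt E g : ℝ) - N * (p + ε))) := by
    have h0 : ((bad.card : ℝ)) = ∑ _g ∈ bad, (1:ℝ) := by simp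
    rw [h0]
    apply Finset.sum_le_sum
    intro g hg
    rw [hbad, Finset.mem_filter] at hg
    have : 0 ≤ lam * ((cnt E g : ℝ) - N * (p + ε)) := by
      apply mul_nonneg hl0; linarith [hg.2]
    exact Real.one_le_exp this
  have step2 : ∑ g ∈ bad, Real.exp (lam * ((cnt E g : ℝ) - N * (p + ε)))
      ≤ ∑ g : S → D, Real.exp (lam * ((cnt E g : ℝ) - N * (p + ε))) :=
    Finset.sum_le_sum_of_subset_of_nonneg (Finset.subset_univ _)
      (fun g _ _ => (Real.exp_pos _).le)
  have step3 : ∑ g : S → D, Real.exp (lam * ((cnt E g : ℝ) - N * (p + ε)))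
      = Real.exp (-(lam * N * ε)) * ∑ g : S → D, Real.exp (lam * ((cnt E g : ℝ) - N * p)) := by
    rw [Finset.mul_sum]
    apply Finset.sum_congr rfl
    intro g _
    rw [← Real.exp_add]
    congr 1
    ring
  have step4 := mgf_factor (S := S) E lam p
  have step5 : (∑ y : D, Real.exp (lam * (ind E y - p))) ^ (Fintype.card S)
      ≤ ((Fintype.card D : ℝ) * Real.exp (lam ^ 2)) ^ (Fintype.card S) := by
    apply pow_le_pow_left₀ (Finset.sum_nonneg fun y _ => (Real.exp_pos _).le)
    exact mgf_one E hl0 hl1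
  have step6 : ((Fintype.card D : ℝ) * Real.exp (lam ^ 2)) ^ (Fintype.card S)
      = (Fintype.card D : ℝ) ^ (Fintype.card S) * Real.exp ((Fintype.card S : ℕ) * lam ^ 2) := by
    rw [mul_pow, Real.exp_nat_mul]
  have hexp : Real.exp (-(lam * N * ε)) * Real.exp ((Fintype.card S : ℕ) * lam ^ 2)
      = Real.exp (-N * ε ^ 2 / 4) := by
    rw [← Real.exp_add]
    congr 1
    rw [hlam, hN]
    ring
  calc ((bad.card : ℝ))
      ≤ Real.exp (-(lam * N * ε)) * ∑ g : S → D, Real.exp (lam * ((cnt E g : ℝ) - N * p)) := by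
        rw [← step3]; exact le_trans step1 step2
    _ ≤ Real.exp (-(lam * N * ε)) * (((Fintype.card D : ℝ) * Real.exp (lam ^ 2)) ^ (Fintype.card S)) := by
        apply mul_le_mul_of_nonneg_left _ (Real.exp_pos _).le
        rw [step4]; exact step5
    _ = Real.exp (-N * ε ^ 2 / 4) * (Fintype.card D : ℝ) ^ (Fintype.card S) := by
        rw [step6, ← hexp]; ring

lemma cnt_le (E : Finset D) (g : S → D) : cnt E g ≤ Fintype.card S :=
  le_trans (Finset.card_le_card (Finset.filter_subset _ _)) (le_of_eq Finset.card_univ)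

lemma cnt_compl (E : Finset D) (g : S → D) : cnt Eᶜ g = Fintype.card S - cnt E g := by
  unfold cnt
  have h := Finset.card_filter_add_card_filter_not (s := (univ : Finset S))
    (p := fun x : S => g x ∈ E)
  simp only [Finset.card_univ] at h
  have he : (univ.filter (fun x : S => g x ∈ Eᶜ)).card
      = (univ.filter (fun x : S => ¬ (g x ∈ E))).card := by
    congr 1; apply Finset.filter_congr; intro x _; simp
  omega

lemma chernoff_abs (E : Finset D) {ε : ℝ} (hε0 : 0 < ε) (hε1 : ε ≤ 1) :
    (((univ : Finset (S → D)).filter (fun g : S → D =>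
        ε < |(cnt E g : ℝ) / (Fintype.card S : ℝ) - (E.card : ℝ) / (Fintype.card D : ℝ)|)).card : ℝ)
      ≤ 2 * Real.exp (-(Fintype.card S : ℝ) * ε ^ 2 / 4)
          * (Fintype.card D : ℝ) ^ (Fintype.card S) := by
  have hN : (0:ℝ) < Fintype.card S := by exact_mod_cast Fintype.card_pos
  have hD : (0:ℝ) < Fintype.card D := by exact_mod_cast Fintype.card_pos
  set badU := (univ : Finset (S → D)).filter (fun g : S → D =>
    (Fintype.card S : ℝ) * ((E.card : ℝ) / (Fintype.card D : ℝ) + ε) ≤ (cnt E g : ℝ)) with hbU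
  set badL := (univ : Finset (S → D)).filter (fun g : S → D =>
    (Fintype.card S : ℝ) * (((Eᶜ : Finset D).card : ℝ) / (Fintype.card D : ℝ) + ε) ≤ (cnt Eᶜ g : ℝ)) with hbL
  have hsub : (univ : Finset (S → D)).filter (fun g : S → D =>
      ε < |(cnt E g : ℝ) / (Fintype.card S : ℝ) - (E.card : ℝ) / (Fintype.card D : ℝ)|) ⊆ badU ∪ badL := by
    intro g hg
    rw [Finset.mem_filter] at hg
    have hg2 := hg.2
    rw [Finset.mem_union, hbU, hbL, Finset.mem_filter, Finset.mem_filter]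
    have hEc : ((Eᶜ : Finset D).card : ℝ) = (Fintype.card D : ℝ) - E.card := by
      rw [Finset.card_compl]
      exact_mod_cast Nat.cast_sub (Finset.card_le_univ E)
    have hcc : (cnt Eᶜ g : ℝ) = (Fintype.card S : ℝ) - cnt E g := by
      rw [cnt_compl]
      exact_mod_cast Nat.cast_sub (cnt_le E g)
    rcases le_or_gt ((E.card : ℝ) / (Fintype.card D : ℝ)) ((cnt E g : ℝ) / (Fintype.card S : ℝ)) with h | h
    · left
      refine ⟨Finset.mem_univ _, ?_⟩
      have habs : ε < (cnt E g : ℝ) / (Fintype.card S : ℝ) - (E.card : ℝ) / (Fintype.card D : ℝ) := by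
        rwa [abs_of_nonneg (by linarith)] at hg2
      have h2 : (E.card : ℝ) / (Fintype.card D : ℝ) + ε < (cnt E g : ℝ) / (Fintype.card S : ℝ) := by
        linarith
      rw [mul_comm]
      exact ((lt_div_iff₀ hN).mp h2).le
    · right
      refine ⟨Finset.mem_univ _, ?_⟩
      have habs : ε < (E.card : ℝ) / (Fintype.card D : ℝ) - (cnt E g : ℝ) / (Fintype.card S : ℝ) := by
        rwa [abs_of_neg (by linarith), neg_sub] at hg2
      rw [hcc, hEc]
      have hc : (Fintype.card S : ℝ) * ((cnt E g : ℝ) / (Fintype.card S : ℝ)) = (cnt E g : ℝ) :=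
        mul_div_cancel₀ _ hN.ne'
      have hm := mul_lt_mul_of_pos_left habs hN
      have hd : ((Fintype.card D : ℝ) - (E.card : ℝ)) / (Fintype.card D : ℝ)
          = 1 - (E.card : ℝ) / (Fintype.card D : ℝ) := by
        field_simp
      rw [hd]
      nlinarith [hm, hc]
  calc (((univ : Finset (S → D)).filter (fun g : S → D =>
        ε < |(cnt E g : ℝ) / (Fintype.card S : ℝ) - (E.card : ℝ) / (Fintype.card D : ℝ)|)).card : ℝ)
      ≤ ((badU ∪ badL).card : ℝ) := by exact_mod_cast Finset.card_le_card hsub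
    _ ≤ (badU.card : ℝ) + (badL.card : ℝ) := by exact_mod_cast Finset.card_union_le _ _
    _ ≤ 2 * Real.exp (-(Fintype.card S : ℝ) * ε ^ 2 / 4) * (Fintype.card D : ℝ) ^ (Fintype.card S) := by
        have h1 := chernoff_upper (S := S) E hε0.le (by linarith)
        have h2 := chernoff_upper (S := S) (Eᶜ : Finset D) hε0.le (by linarith)
        rw [hbU, hbL]
        linarith

lemma exists_good {ι : Type} [Fintype ι] (Ev : ι → Finset D) {ε : ℝ}
    (hε0 : 0 < ε) (hε1 : ε ≤ 1)
    (hcard : 2 * (Fintype.card ι : ℝ) * Real.exp (-(Fintype.card S : ℝ) * ε ^ 2 / 4) < 1) :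
    ∃ g : S → D, ∀ i : ι,
      |(cnt (Ev i) g : ℝ) / (Fintype.card S : ℝ) - ((Ev i).card : ℝ) / (Fintype.card D : ℝ)| ≤ ε := by
  by_contra hcon
  push_neg at hcon
  have hsub : (univ : Finset (S → D)) ⊆ univ.biUnion (fun i : ι =>
      (univ : Finset (S → D)).filter (fun g : S → D =>
        ε < |(cnt (Ev i) g : ℝ) / (Fintype.card S : ℝ) - ((Ev i).card : ℝ) / (Fintype.card D : ℝ)|)) := by
    intro g _
    obtain ⟨i, hi⟩ := hcon g
    exact Finset.mem_biUnion.mpr ⟨i, Finset.mem_univ _, Finset.mem_filter.mpr ⟨Finset.mem_univ _, hi⟩⟩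
  have h1 : (Fintype.card (S → D) : ℝ) ≤ ∑ i : ι, (((univ : Finset (S → D)).filter (fun g : S → D =>
      ε < |(cnt (Ev i) g : ℝ) / (Fintype.card S : ℝ) - ((Ev i).card : ℝ) / (Fintype.card D : ℝ)|)).card : ℝ) := by
    have h := le_trans (Finset.card_le_card hsub) (Finset.card_biUnion_le)
    rw [Finset.card_univ] at h
    exact_mod_cast h
  have h2 : ∑ i : ι, (((univ : Finset (S → D)).filter (fun g : S → D =>
      ε < |(cnt (Ev i) g : ℝ) / (Fintype.card S : ℝ) - ((Ev i).card : ℝ) / (Fintype.card D : ℝ)|)).card : ℝ)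
      ≤ (Fintype.card ι : ℝ) * (2 * Real.exp (-(Fintype.card S : ℝ) * ε ^ 2 / 4)
          * (Fintype.card D : ℝ) ^ (Fintype.card S)) := by
    calc _ ≤ ∑ _i : ι, (2 * Real.exp (-(Fintype.card S : ℝ) * ε ^ 2 / 4)
          * (Fintype.card D : ℝ) ^ (Fintype.card S)) :=
        Finset.sum_le_sum (fun i _ => chernoff_abs (Ev i) hε0 hε1)
      _ = _ := by rw [Finset.sum_const, Finset.card_univ, nsmul_eq_mul]
  have hfun : (Fintype.card (S → D) : ℝ) = (Fintype.card D : ℝ) ^ (Fintype.card S) := by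
    rw [Fintype.card_fun]; push_cast; ring
  have hDpos : (0:ℝ) < (Fintype.card D : ℝ) ^ (Fintype.card S) := by
    apply pow_pos; exact_mod_cast Fintype.card_pos
  have h3 := le_trans h1 h2
  rw [hfun] at h3
  nlinarith [hDpos, hcard]

end prob

section tree

abbrev TreeT (A : Type) (n k : ℕ) : Type :=
  ∀ i : Fin k, (Fin i.val → A) → (Fin n → Bool) → A

noncomputable def toV {A : Type} {n k : ℕ} (a0 : A) (t : TreeT A n k) :
    List A → (Fin n → Bool) → A :=
  fun w X => if h : w.length < k then t ⟨w.length, h⟩ (fun j => w.get j) X else a0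

def ofV {A : Type} {n k : ℕ} (v : List A → (Fin n → Bool) → A) : TreeT A n k :=
  fun _i w X => v (List.ofFn w) X

lemma toV_ofV {A : Type} {n k : ℕ} (a0 : A) (v : List A → (Fin n → Bool) → A)
    (w : List A) (X : Fin n → Bool) (h : w.length < k) :
    toV a0 (ofV (n := n) (k := k) v) w X = v w X := by
  unfold toV ofV
  rw [dif_pos h]
  exact congrArg (fun l => v l X) (List.ofFn_get w)

lemma foldl_tree_congr {A I : Type*} {k : ℕ} (v v' : List A → I → A)
    (h : ∀ w X, w.length < k → v w X = v' w X) :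
    ∀ (Xs : List I) (w0 : List A), w0.length + Xs.length ≤ k →
      Xs.foldl (fun w X => w ++ [v w X]) w0 = Xs.foldl (fun w X => w ++ [v' w X]) w0
  | [], _, _ => rfl
  | X :: Xs, w0, hl => by
      simp only [List.foldl_cons]
      rw [h w0 X (by simp only [List.length_cons] at hl; omega)]
      exact foldl_tree_congr v v' h Xs (w0 ++ [v' w0 X])
        (by simp only [List.length_append, List.length_cons, List.length_nil] at hl ⊢; omega)

lemma treeOut_eq {A : Type} {n k : ℕ} (a0 : A) (v : List A → (Fin n → Bool) → A)
    (X : Fin k → (Fin n → Bool)) :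
    treeOutList v (List.ofFn X) = treeOutList (toV a0 (ofV (n := n) (k := k) v)) (List.ofFn X) := by
  unfold treeOutList
  exact foldl_tree_congr _ _ (fun w Y hw => (toV_ofV a0 v w Y hw).symm) (List.ofFn X) []
    (by simp only [List.length_nil, List.length_ofFn]; omega)

lemma card_TreeT_le {A : Type} [Fintype A] (n k : ℕ) (ha : 2 ≤ Fintype.card A) :
    Fintype.card (TreeT A n k) ≤ Fintype.card A ^ (2 ^ n * Fintype.card A ^ k) := by
  classical
  set a := Fintype.card A with hA
  have hcard : Fintype.card (TreeT A n k) = ∏ i : Fin k, a ^ (2 ^ n * a ^ (i : ℕ)) := by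
    rw [Fintype.card_pi]
    apply Finset.prod_congr rfl
    intro i _
    simp only [Fintype.card_fun, Fintype.card_fin, Fintype.card_bool]
    rw [← pow_mul, ← hA]
  rw [hcard, Finset.prod_pow_eq_pow_sum]
  apply Nat.pow_le_pow_right (by omega)
  have hsum : ∑ i : Fin k, 2 ^ n * a ^ (i : ℕ) = 2 ^ n * ∑ i ∈ Finset.range k, a ^ i := by
    rw [← Finset.mul_sum, Fin.sum_univ_eq_sum_range]
  rw [hsum]
  apply Nat.mul_le_mul_left
  have hgeo : ∀ m : ℕ, ∑ i ∈ Finset.range m, a ^ i ≤ a ^ m := by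
    intro m
    induction m with
    | zero => simp
    | succ m ih =>
        rw [Finset.sum_range_succ, pow_succ]
        have h2 : a ^ m * 2 ≤ a ^ m * a := Nat.mul_le_mul_left _ ha
        omega
  exact hgeo k

end tree

section prlem
variable {α : Type} [Fintype α]

lemma pr_congr {P Q : α → Prop} (h : ∀ x, P x ↔ Q x) : pr P = pr Q := by
  have : P = Q := funext fun x => propext (h x)
  rw [this]

lemma pr_eq_cnt {S D : Type} [Fintype S] [Fintype D] [Nonempty S] [Nonempty D] (E : Finset D) (g : S → D) :
    pr (fun x : S => g x ∈ E) = (cnt E g : ℝ) / (Fintype.card S : ℝ) := by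
  unfold pr cnt
  congr 2
  congr 1
  apply Finset.filter_congr_decidable

lemma pr_mem {D : Type} [Fintype D] [Nonempty D] (E : Finset D) :
    pr (fun y : D => y ∈ E) = (E.card : ℝ) / (Fintype.card D : ℝ) := by
  unfold pr
  congr 2
  rw [Finset.filter_congr_decidable]
  congr 1
  ext y; simp

end prlem

end BDTAux


set_option maxHeartbeats 2000000 in
/-- there is an absolute constant `C > 0` such that for all positive
`n, k`, every finite alphabet with at least two symbols, and every `0 < γ ≤ 1`,
there is a `γ`-PRG for `(k,n,Σ)` block decision trees with seed length
`s ≤ n + C·(k·log₂|Σ| + (1+log₂ k)·(1+log₂(1/γ)))`. -/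
theorem bdt_prg :
    ∃ C : ℝ, 0 < C ∧
      ∀ n k : ℕ, 0 < n → 0 < k →
        ∀ (A : Type) [Fintype A], 2 ≤ Fintype.card A →
          ∀ γ : ℝ, 0 < γ → γ ≤ 1 →
            ∃ (s : ℕ) (Gen : (Fin s → Bool) → Fin k → (Fin n → Bool)),
              IsBDTPRG n k s A γ Gen ∧
              (s : ℝ) ≤ n + C * (k * Real.logb 2 (Fintype.card A : ℝ) +
                (1 + Real.logb 2 (k : ℝ)) * (1 + Real.logb 2 (1 / γ))) := by
  refine ⟨100, by norm_num, ?_⟩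
  intro n k hn hk A _ hA2 γ hγ0 hγ1
  have hApos : 0 < Fintype.card A := by omega
  obtain ⟨a0⟩ : Nonempty A := Fintype.card_pos_iff.mp hApos
  set a : ℕ := Fintype.card A with haA
  set L : ℕ := Nat.log 2 a + 1 with hL
  set t : ℕ := ⌈Real.logb 2 (1/γ)⌉₊ with ht
  set s : ℕ := n + 4*k*L + 2*t + 10 with hs
  refine ⟨s, ?_⟩
  set ε : ℝ := γ / (a:ℝ)^k with hε
  have ha1r : (1:ℝ) ≤ (a:ℝ) := by exact_mod_cast (by omega : 1 ≤ a)
  have hak1 : (1:ℝ) ≤ (a:ℝ)^k := one_le_pow₀ ha1r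
  have hakpos : (0:ℝ) < (a:ℝ)^k := by positivity
  have hε0 : 0 < ε := by rw [hε]; positivity
  have hε1 : ε ≤ 1 := by
    rw [hε, div_le_one hakpos]; linarith
  -- the index family
  set Ev : (BDTAux.TreeT A n k × (Fin k → A)) → Finset (Fin k → (Fin n → Bool)) := fun i =>
    Finset.univ.filter
      (fun X => treeOutList (BDTAux.toV a0 i.1) (List.ofFn X) = List.ofFn i.2) with hEv
  -- cardinalities
  have hcardS : Fintype.card (Fin s → Bool) = 2 ^ s := by
    rw [Fintype.card_fun, Fintype.card_bool, Fintype.card_fin]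
  have hcardk : Fintype.card (Fin k → A) = a ^ k := by
    rw [Fintype.card_fun, Fintype.card_fin, haA]
  have hcardι : Fintype.card (BDTAux.TreeT A n k × (Fin k → A))
      = Fintype.card (BDTAux.TreeT A n k) * a ^ k := by
    rw [Fintype.card_prod, hcardk]
  have ha2L : a ≤ 2 ^ L := (Nat.lt_pow_succ_log_self (by norm_num) a).le
  have hcardT : Fintype.card (BDTAux.TreeT A n k) ≤ a ^ (2^n * a^k) :=
    BDTAux.card_TreeT_le n k hA2
  set M : ℕ := L * (2^n * a^k + k) + 2 with hM
  -- step 1 : 2 * card ι < 2 ^ M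
  have hstep1 : 2 * Fintype.card (BDTAux.TreeT A n k × (Fin k → A)) < 2 ^ M := by
    calc 2 * Fintype.card (BDTAux.TreeT A n k × (Fin k → A))
        ≤ 2 * (a ^ (2^n * a^k) * a ^ k) := by
          rw [hcardι]; exact Nat.mul_le_mul_left _ (Nat.mul_le_mul_right _ hcardT)
      _ = 2 * a ^ (2^n * a^k + k) := by rw [pow_add]
      _ ≤ 2 * (2^L) ^ (2^n * a^k + k) :=
          Nat.mul_le_mul_left _ (Nat.pow_le_pow_left ha2L _)
      _ = 2 ^ (L * (2^n * a^k + k) + 1) := by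
          rw [← pow_mul, pow_succ, mul_comm (2 ^ (L * (2 ^ n * a ^ k + k))) 2]
      _ < 2 ^ M := pow_lt_pow_right₀ (by norm_num) (by omega)
  -- step 2 : M ≤ 256 * (2^n * a^(2*k))
  have hstep2 : M ≤ 256 * (2^n * a^(2*k)) := by
    have hLa : L ≤ a := by
      have := Nat.log_lt_self 2 (x := a) (by omega)
      omega
    have hka : k ≤ a ^ k := le_trans (Nat.lt_two_pow_self (n := k)).le (Nat.pow_le_pow_left hA2 k)
    have h2n : 1 ≤ 2^n := Nat.one_le_two_pow
    have hb1 : a ^ k ≤ 2^n * a^k := Nat.le_mul_of_pos_left _ (by omega)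
    have h1 : M ≤ a * (2^n * a^k + k) + 2 := by
      rw [hM]; exact Nat.add_le_add_right (Nat.mul_le_mul_right _ hLa) 2
    have h2 : a * (2^n * a^k + k) ≤ a * (2 * (2^n * a^k)) := by
      apply Nat.mul_le_mul_left
      omega
    have h3 : a * (2 * (2^n * a^k)) = 2 * (2^n * a^(k+1)) := by ring
    have h4 : a ^ (k+1) ≤ a ^ (2*k) := Nat.pow_le_pow_right (by omega) (by omega)
    have h5 : 2 ≤ 2^n * a^(2*k) := by
      have : 2 ≤ a^(2*k) := le_trans hA2 (Nat.le_self_pow (by omega) a)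
      calc 2 ≤ a ^ (2*k) := this
        _ ≤ 2^n * a^(2*k) := Nat.le_mul_of_pos_left _ (by omega)
    have h6 : 2^n * a^(k+1) ≤ 2^n * a^(2*k) := Nat.mul_le_mul_left _ h4
    omega
  -- real-valued numeric facts
  have hcastS : ((Fintype.card (Fin s → Bool)) : ℝ) = (2:ℝ)^s := by
    rw [hcardS]; push_cast; ring
  have hinv : 1/γ ≤ (2:ℝ)^t := by
    have h0 : (1:ℝ) ≤ 1/γ := one_le_one_div hγ0 hγ1
    have h1 : Real.logb 2 (1/γ) ≤ (t:ℝ) := Nat.le_ceil _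
    calc 1/γ = (2:ℝ) ^ (Real.logb 2 (1/γ)) :=
          (Real.rpow_logb (by norm_num) (by norm_num) (by positivity)).symm
      _ ≤ (2:ℝ) ^ ((t:ℝ)) := Real.rpow_le_rpow_of_exponent_le (by norm_num) h1
      _ = (2:ℝ)^(t:ℕ) := by rw [Real.rpow_natCast]
  have hgt2 : (1:ℝ) ≤ (2:ℝ)^t * γ := by
    rw [div_le_iff₀ hγ0] at hinv
    linarith
  have haLr : ((a:ℝ)) ≤ (2:ℝ)^L := by exact_mod_cast ha2L
  -- key : 256 * 2^n * a^(2k) ≤ 2^s * ε^2 / 4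
  have key : (256:ℝ) * 2^n * ((a:ℝ)^(2*k)) ≤ (2:ℝ)^s * ε^2 / 4 := by
    rw [hε, div_pow, le_div_iff₀ (by norm_num : (0:ℝ) < 4)]
    rw [show (2:ℝ)^s * (γ^2/((a:ℝ)^k)^2) = (2:ℝ)^s * γ^2 / ((a:ℝ)^k)^2 from by ring,
      le_div_iff₀ (by positivity : (0:ℝ) < ((a:ℝ)^k)^2)]
    -- goal : 256*2^n*a^(2k) * 4 * (a^k)^2 ≤ 2^s * γ^2
    have hp1 : ((a:ℝ))^(4*k) ≤ ((2:ℝ)^L)^(4*k) :=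
      pow_le_pow_left₀ (by positivity) haLr _
    have hp2 : (1:ℝ) ≤ ((2:ℝ)^t * γ)^2 := one_le_pow₀ hgt2
    have hprod : ((a:ℝ))^(4*k) * 1 ≤ ((2:ℝ)^L)^(4*k) * ((2:ℝ)^t * γ)^2 :=
      mul_le_mul hp1 hp2 (by norm_num) (by positivity)
    have hmul := mul_le_mul_of_nonneg_left hprod
      (by positivity : (0:ℝ) ≤ 1024 * 2^n)
    calc (256:ℝ) * 2^n * ((a:ℝ)^(2*k)) * 4 * ((a:ℝ)^k)^2
        = 1024 * 2^n * (((a:ℝ))^(4*k) * 1) := by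
          ring
      _ ≤ 1024 * 2^n * (((2:ℝ)^L)^(4*k) * ((2:ℝ)^t * γ)^2) := hmul
      _ = (2:ℝ)^s * γ^2 := by
          rw [hs]
          ring
  -- the union bound condition
  have hMle : (M:ℝ) ≤ (2:ℝ)^s * ε^2 / 4 := by
    have hc : (M:ℝ) ≤ (256:ℝ) * 2^n * ((a:ℝ)^(2*k)) := by
      calc (M:ℝ) ≤ ((256*(2^n*a^(2*k)) : ℕ):ℝ) := by exact_mod_cast hstep2
        _ = (256:ℝ) * 2^n * ((a:ℝ)^(2*k)) := by push_cast; ring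
    exact hc.trans key
  have hcond : 2 * (Fintype.card (BDTAux.TreeT A n k × (Fin k → A)) : ℝ)
      * Real.exp (-(Fintype.card (Fin s → Bool) : ℝ) * ε^2/4) < 1 := by
    have hlt : (2 * (Fintype.card (BDTAux.TreeT A n k × (Fin k → A)) : ℝ)) < (2:ℝ)^M := by
      exact_mod_cast hstep1
    have h2e : ((2:ℝ))^M ≤ Real.exp M := by
      calc (2:ℝ)^M ≤ (Real.exp 1)^M :=
            pow_le_pow_left₀ (by norm_num) (by linarith [Real.add_one_le_exp 1]) M
        _ = Real.exp M := by rw [← Real.exp_nat_mul, mul_one]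
    have hee : Real.exp (M:ℝ) ≤ Real.exp ((2:ℝ)^s * ε^2/4) := Real.exp_le_exp.mpr hMle
    have hx : (2 * (Fintype.card (BDTAux.TreeT A n k × (Fin k → A)) : ℝ))
        < Real.exp ((2:ℝ)^s * ε^2/4) := lt_of_lt_of_le hlt (le_trans h2e hee)
    have hneg : -(Fintype.card (Fin s → Bool) : ℝ) * ε^2/4 = -((2:ℝ)^s * ε^2/4) := by
      rw [hcastS]; ring
    rw [hneg, Real.exp_neg, ← div_eq_mul_inv, div_lt_one (Real.exp_pos _)]
    exact hx
  obtain ⟨g, hg⟩ := BDTAux.exists_good (S := Fin s → Bool) (D := Fin k → (Fin n → Bool))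
    Ev hε0 hε1 hcond
  refine ⟨g, ?_, ?_⟩
  · -- the PRG property
    intro v
    have hterm : ∀ σ : Fin k → A,
        |pr (fun x : Fin s → Bool => treeOutList v (List.ofFn (g x)) = List.ofFn σ)
          - pr (fun X : Fin k → (Fin n → Bool) => treeOutList v (List.ofFn X) = List.ofFn σ)|
          ≤ ε := by
      intro σ
      have h1 : pr (fun x : Fin s → Bool => treeOutList v (List.ofFn (g x)) = List.ofFn σ)
          = (BDTAux.cnt (Ev (BDTAux.ofV v, σ)) g : ℝ) / (Fintype.card (Fin s → Bool) : ℝ) := by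
        rw [← BDTAux.pr_eq_cnt]
        apply BDTAux.pr_congr
        intro x
        simp only [hEv, Finset.mem_filter, Finset.mem_univ, true_and]
        rw [← BDTAux.treeOut_eq a0 v (g x)]
      have h2 : pr (fun X : Fin k → (Fin n → Bool) => treeOutList v (List.ofFn X) = List.ofFn σ)
          = ((Ev (BDTAux.ofV v, σ)).card : ℝ) / (Fintype.card (Fin k → (Fin n → Bool)) : ℝ) := by
        rw [← BDTAux.pr_mem]
        apply BDTAux.pr_congr
        intro X
        simp only [hEv, Finset.mem_filter, Finset.mem_univ, true_and]
        rw [← BDTAux.treeOut_eq a0 v X]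
      rw [h1, h2]
      exact hg (BDTAux.ofV v, σ)
    calc (1 / 2) * ∑ σ : Fin k → A,
        |pr (fun x : Fin s → Bool => treeOutList v (List.ofFn (g x)) = List.ofFn σ)
          - pr (fun X : Fin k → (Fin n → Bool) => treeOutList v (List.ofFn X) = List.ofFn σ)|
        ≤ (1 / 2) * ∑ _σ : Fin k → A, ε := by
          apply mul_le_mul_of_nonneg_left _ (by norm_num)
          exact Finset.sum_le_sum (fun σ _ => hterm σ)
      _ = (1 / 2) * ((a:ℝ)^k * ε) := by
          rw [Finset.sum_const, Finset.card_univ, hcardk, nsmul_eq_mul]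
          push_cast
          ring
      _ ≤ γ := by
          rw [hε]
          rw [mul_div_cancel₀ _ hakpos.ne']
          linarith
  · -- seed length
    have hlogA1 : (1:ℝ) ≤ Real.logb 2 ((a:ℕ):ℝ) := by
      rw [Real.le_logb_iff_rpow_le (by norm_num) (by positivity)]
      rw [Real.rpow_one]
      exact_mod_cast hA2
    have hlogNat : ((Nat.log 2 a : ℕ):ℝ) ≤ Real.logb 2 ((a:ℕ):ℝ) := by
      rw [Real.le_logb_iff_rpow_le (by norm_num) (by positivity)]
      rw [Real.rpow_natCast]
      exact_mod_cast Nat.pow_log_le_self 2 (by omega)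
    have hLr : (L:ℝ) ≤ 2 * Real.logb 2 ((a:ℕ):ℝ) := by
      rw [hL]
      push_cast
      linarith
    have hlogk : 0 ≤ Real.logb 2 (k:ℝ) := Real.logb_nonneg (by norm_num) (by exact_mod_cast hk)
    have hlogg : 0 ≤ Real.logb 2 (1/γ) := Real.logb_nonneg (by norm_num) (one_le_one_div hγ0 hγ1)
    have htr : (t:ℝ) ≤ 1 + Real.logb 2 (1/γ) := by
      have := Nat.ceil_lt_add_one hlogg
      rw [ht]
      linarith
    have hk1 : (1:ℝ) ≤ (k:ℝ) := by exact_mod_cast hk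
    have hP1 : (1:ℝ) ≤ (k:ℝ) * Real.logb 2 ((a:ℕ):ℝ) := by
      have := mul_le_mul hk1 hlogA1 zero_le_one (by linarith)
      linarith [this]
    have hkL : (k:ℝ)*(L:ℝ) ≤ (k:ℝ)*(2*Real.logb 2 ((a:ℕ):ℝ)) :=
      mul_le_mul_of_nonneg_left hLr (by linarith)
    have hQR0 : 0 ≤ (1 + Real.logb 2 (k:ℝ))*(1 + Real.logb 2 (1/γ)) := by
      apply mul_nonneg <;> linarith
    have hQR : (1 + Real.logb 2 (1/γ))
        ≤ (1 + Real.logb 2 (k:ℝ))*(1 + Real.logb 2 (1/γ)) :=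
      le_mul_of_one_le_left (by linarith) (by linarith)
    rw [hs]
    push_cast
    nlinarith [hkL, htr, hQR, hP1, hQR0]
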